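/- Let G be a finite group. For every g ∈ G there exists a normal subgroup N of G such that K_g = N°, where K_g = ⋃{C_h : E_h = E_g}, E_g = {χ ∈ Irr(G) : χ(g) ≠ χ(1)}, and N° is taken with respect to the set of all normal subgroups of G; specifically N = ⋂{ker χ : χ ∈ Irr(G), χ(g) = χ(1)}. -/

import Mathlib

open CategoryTheory
open scoped Classical BigOperators

/-- The set of irreducible complex characters of `G`. -/
def Irr (G : Type) [Group G] : Set (G → ℂ) :=
  {f | ∃ V : FDRep ℂ G, Simple V ∧ V.character = f}

/-- The kernel of a character, `{g : G | χ g = χ 1}`. -/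
def charKer {G : Type} [Group G] (f : G → ℂ) : Set G := {g | f g = f 1}

/-- `N° = N \ ⋃ {H ∈ A : H ⊊ N}`. -/
def Ncirc {G : Type} [Group G] (A : Set (Subgroup G)) (N : Subgroup G) : Set G :=
  (N : Set G) \ ⋃ H ∈ {H | H ∈ A ∧ H < N}, (H : Set G)

/-- `X^N`, the irreducible characters whose kernel contains `N`. -/
def XN {G : Type} [Group G] (N : Subgroup G) : Set (G → ℂ) :=
  {ψ ∈ Irr G | (N : Set G) ⊆ charKer ψ}

/-- `X^{N•} = X^N \ ⋃ {X^K : K ∈ A, N ⊊ K}`. -/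
def XNbullet {G : Type} [Group G] (A : Set (Subgroup G)) (N : Subgroup G) : Set (G → ℂ) :=
  XN N \ ⋃ K ∈ {K | K ∈ A ∧ N < K}, XN K

/-- `χ^N = Σ_{ψ ∈ X^N} ψ(1) ψ`. -/
noncomputable def chiN {G : Type} [Group G] (N : Subgroup G) : G → ℂ :=
  fun g => ∑ᶠ ψ ∈ XN N, ψ 1 * ψ g

/-- `χ^{N•} = Σ_{ψ ∈ X^{N•}} ψ(1) ψ`. -/
noncomputable def chiNbullet {G : Type} [Group G] (A : Set (Subgroup G)) (N : Subgroup G) :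
    G → ℂ :=
  fun g => ∑ᶠ ψ ∈ XNbullet A N, ψ 1 * ψ g

/-- `N°` taken with respect to the set of all normal subgroups of `G`. -/
def NcircAll {G : Type} [Group G] (N : Subgroup G) : Set G :=
  (N : Set G) \ ⋃ H ∈ {H : Subgroup G | H.Normal ∧ H < N}, (H : Set G)

/-- `[g] = {h : h^G = g^G}` where `h^G` is the normal closure of `h`. -/
def closureClass {G : Type} [Group G] (g : G) : Set G :=
  {h | Subgroup.normalClosure {h} = Subgroup.normalClosure {g}}

/-- `E_g`, the irreducible characters not containing `g` in their kernel. -/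
def Eg {G : Type} [Group G] (g : G) : Set (G → ℂ) :=
  {χ ∈ Irr G | χ g ≠ χ 1}

/-- `K_g = ⋃ {C_h : E_h = E_g}`. -/
def Kg {G : Type} [Group G] (g : G) : Set G :=
  {x | ∃ h : G, Eg h = Eg g ∧ IsConj h x}


section Aux
open Polynomial


lemma sq_not_dvd_pow_sub_one {n : ℕ} (hn : 0 < n) :
    ¬ ((X - C (1:ℂ)) ^ 2 ∣ X ^ n - 1) := by
  rintro ⟨r, hr⟩
  have := congrArg (fun p => Polynomial.eval 1 (derivative p)) hr
  simp [derivative_pow, mul_comm] at this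
  exact hn.ne' (by exact_mod_cast this)

lemma matrix_eq_one_of_trace {d n : ℕ} (hn : 0 < n) (M : Matrix (Fin d) (Fin d) ℂ)
    (hM : M ^ n = 1) (htr : Matrix.trace M = (d : ℂ)) : M = 1 := by
  rcases Nat.eq_zero_or_pos d with hd | hd
  · subst hd; exact Subsingleton.elim _ _
  have : NeZero d := ⟨hd.ne'⟩
  -- eigenvalue fact
  have hroot : ∀ μ ∈ M.charpoly.roots, μ ^ n = 1 := by
    intro μ hμ
    have hr : M.charpoly.IsRoot μ := isRoot_of_mem_roots hμ
    have heval : Polynomial.eval μ M.charpoly = ((Matrix.scalar (Fin d)) μ - M).det := by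
      rw [Matrix.charpoly, eval_det, Matrix.matPolyEquiv_charmatrix]
      simp
    have hdet : ((Matrix.scalar (Fin d)) μ - M).det = 0 := by rw [← heval]; exact hr
    obtain ⟨v, hv0, hv⟩ := Matrix.exists_mulVec_eq_zero_iff.mpr hdet
    have hMv : M.mulVec v = μ • v := by
      rw [Matrix.sub_mulVec] at hv
      have hs : ((Matrix.scalar (Fin d)) μ).mulVec v = μ • v := by
        ext i; simp [Matrix.scalar, Matrix.mulVec_diagonal]
      rw [hs, sub_eq_zero] at hv
      exact hv.symm
    have hpow : ∀ k : ℕ, (M ^ k).mulVec v = μ ^ k • v := by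
      intro k
      induction k with
      | zero => simp
      | succ k ih =>
        rw [pow_succ', ← Matrix.mulVec_mulVec, ih, Matrix.mulVec_smul, hMv, smul_smul, ← pow_succ]
    have := hpow n
    rw [hM] at this
    obtain ⟨i, hi⟩ := Function.ne_iff.mp hv0
    have : v i = (μ ^ n) * v i := by
      have := congrFun this i
      simpa using this
    have : (μ ^ n - 1) * v i = 0 := by ring_nf; linear_combination -this
    rcases mul_eq_zero.mp this with h | h
    · exact sub_eq_zero.mp h
    · exact absurd h hi
  have hcard : Multiset.card M.charpoly.roots = d := by
    rw [(splits_iff_card_roots).mp (IsAlgClosed.splits M.charpoly),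
      Matrix.charpoly_natDegree_eq_dim, Fintype.card_fin]
  have habs : ∀ μ ∈ M.charpoly.roots, ‖μ‖ = 1 := by
    intro μ hμ
    have h1 : ‖μ‖ ^ n = 1 := by
      rw [← norm_pow, hroot μ hμ, norm_one]
    have h0 : 0 ≤ ‖μ‖ := norm_nonneg μ
    by_contra hne
    rcases lt_or_gt_of_ne hne with hlt | hgt
    · have := pow_lt_one₀ h0 hlt hn.ne'
      rw [h1] at this; exact lt_irrefl _ this
    · have := one_lt_pow₀ hgt hn.ne'
      rw [h1] at this; exact lt_irrefl _ this
  have hone : ∀ μ ∈ M.charpoly.roots, μ = 1 := by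
    by_contra hc
    push_neg at hc
    obtain ⟨μ₀, hμ₀, hne⟩ := hc
    have hre : ∀ μ ∈ M.charpoly.roots, μ.re ≤ 1 := fun μ hμ =>
      (Complex.re_le_norm μ).trans (le_of_eq (habs μ hμ))
    have hlt : μ₀.re < 1 := by
      rcases lt_or_eq_of_le (hre μ₀ hμ₀) with h | h
      · exact h
      · exfalso
        have ha := habs μ₀ hμ₀
        have h2 : ‖μ₀‖ ^ 2 = μ₀.re * μ₀.re + μ₀.im * μ₀.im := by
          rw [Complex.sq_norm, Complex.normSq_apply]
        rw [ha] at h2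
        have him : μ₀.im = 0 := by nlinarith
        exact hne (Complex.ext (by simp [h]) (by simp [him]))
    -- sum of real parts
    set S : Multiset ℝ := M.charpoly.roots.map Complex.re with hS
    have hmem : μ₀.re ∈ S := Multiset.mem_map_of_mem _ hμ₀
    have hsum : S.sum = (d : ℝ) := by
      have h1 : M.trace = M.charpoly.roots.sum := Matrix.trace_eq_sum_roots_charpoly M
      have h2 : Complex.reAddGroupHom M.charpoly.roots.sum = S.sum :=
        AddMonoidHom.map_multiset_sum Complex.reAddGroupHom M.charpoly.roots
      rw [← h2]
      rw [← h1, htr]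
      simp
    have hcardS : Multiset.card S = d := by rw [hS, Multiset.card_map, hcard]
    obtain ⟨S', hS'⟩ := Multiset.exists_cons_of_mem hmem
    have hle : S'.sum ≤ (Multiset.card S' : ℝ) := by
      have := Multiset.sum_le_card_nsmul S' 1 (by
        intro x hx
        have hxS : x ∈ S := by rw [hS']; exact Multiset.mem_cons_of_mem hx
        obtain ⟨μ, hμ, rfl⟩ := Multiset.mem_map.mp hxS
        exact hre μ hμ)
      simpa using this
    have hcard' : (Multiset.card S' : ℝ) = (d : ℝ) - 1 := by
      have : Multiset.card S = Multiset.card S' + 1 := by rw [hS']; simp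
      rw [hcardS] at this
      have : d = Multiset.card S' + 1 := this
      rw [this]; push_cast; ring
    have : S.sum < (d : ℝ) := by
      rw [hS', Multiset.sum_cons]
      calc μ₀.re + S'.sum < 1 + ((d:ℝ) - 1) := by
            apply add_lt_add_of_lt_of_le hlt (hle.trans (le_of_eq hcard'))
        _ = d := by ring
    rw [hsum] at this
    exact lt_irrefl _ this
  have hrep : M.charpoly.roots = Multiset.replicate d (1 : ℂ) := by
    have h := Multiset.eq_replicate_card.mpr hone
    rw [hcard] at h
    exact h
  have hcp : M.charpoly = (X - C (1:ℂ)) ^ d := by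
    have h1 := prod_multiset_X_sub_C_of_monic_of_roots_card_eq M.charpoly_monic
      (by rw [hcard, Matrix.charpoly_natDegree_eq_dim, Fintype.card_fin])
    rw [← h1, hrep, Multiset.map_replicate, Multiset.prod_replicate]
  have hint : IsIntegral ℂ M := ⟨M.charpoly, M.charpoly_monic, by
    rw [← Polynomial.aeval_def]; exact M.aeval_self_charpoly⟩
  have hdvd1 : minpoly ℂ M ∣ (X - C 1) ^ d := minpoly.dvd ℂ M (by
    rw [← hcp]; exact M.aeval_self_charpoly)
  have hdvd2 : minpoly ℂ M ∣ X ^ n - 1 := minpoly.dvd ℂ M (by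
    rw [map_sub, map_pow, aeval_X, map_one, hM, sub_self])
  obtain ⟨i, hi, hassoc⟩ := (dvd_prime_pow (prime_X_sub_C (1:ℂ)) d).mp hdvd1
  have hmin : minpoly ℂ M = (X - C 1) ^ i :=
    eq_of_monic_of_associated (minpoly.monic hint) ((monic_X_sub_C (1:ℂ)).pow _) hassoc
  have hnontriv : Nontrivial (Matrix (Fin d) (Fin d) ℂ) := by infer_instance
  match i, hmin with
  | 0, hmin =>
    exact absurd hmin (by simpa using minpoly.ne_one ℂ M)
  | 1, hmin =>
    have h0 := minpoly.aeval ℂ M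
    rw [hmin, pow_one, map_sub, aeval_X, aeval_C] at h0
    rw [sub_eq_zero] at h0
    simpa using h0
  | (i+2), hmin =>
    exfalso
    have h2 : (X - C (1:ℂ)) ^ 2 ∣ X ^ n - 1 := by
      refine dvd_trans ?_ hdvd2
      rw [hmin]
      exact pow_dvd_pow _ (by omega)
    exact sq_not_dvd_pow_sub_one hn h2

lemma char_eq_char_one_iff {G : Type} [Group G] [Fintype G] (V : FDRep ℂ G) (x : G) :
    V.character x = V.character 1 ↔ V.ρ x = 1 := by
  constructor
  · intro h
    by_cases hs : Subsingleton V
    · exact LinearMap.ext fun v => Subsingleton.elim _ _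
    let b := Module.finBasis ℂ V
    set n := Fintype.card G with hn
    let E := LinearMap.toMatrixAlgEquiv b
    have hpow : E (V.ρ x) ^ n = 1 := by
      rw [← map_pow, ← map_pow, pow_card_eq_one, map_one, map_one]
    have htr : (E (V.ρ x)).trace = (Module.finrank ℂ V : ℂ) := by
      have h1 : V.character x = (E (V.ρ x)).trace := by
        show LinearMap.trace ℂ V (V.ρ x) = _
        rw [LinearMap.trace_eq_matrix_trace ℂ b]
        rfl
      rw [← h1, h, FDRep.char_one]
    have := matrix_eq_one_of_trace Fintype.card_pos (E (V.ρ x)) hpow htr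
    apply E.injective
    rw [this, map_one]
  · intro h
    show LinearMap.trace ℂ V (V.ρ x) = LinearMap.trace ℂ V (V.ρ 1)
    rw [h, map_one V.ρ]



lemma simple_of_irreducible {G : Type} [Group G] {W : Type} [AddCommGroup W] [Module ℂ W]
    [FiniteDimensional ℂ W] [Nontrivial W] (ρ : Representation ℂ G W)
    (hirr : ∀ S : Submodule ℂ W, (∀ g : G, ∀ v ∈ S, ρ g v ∈ S) → S = ⊥ ∨ S = ⊤) :
    Simple (FDRep.of ρ) := by
  constructor
  intro Y f hf
  haveI := hf
  constructor
  · intro hiso h0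
    obtain ⟨w, hw⟩ := exists_ne (0 : W)
    have h1 : (CategoryTheory.inv f ≫ f).hom w = w := by
      rw [IsIso.inv_hom_id]; rfl
    rw [Action.comp_hom] at h1
    have h2 : f.hom ((CategoryTheory.inv f).hom w) = w := h1
    set u := (CategoryTheory.inv f).hom w with hu
    clear_value u
    have h3 : f.hom u = 0 := by
      rw [h0]; rfl
    exact hw (by rw [← h2, h3])
  · intro hne
    set φ : (Y : Type) →ₗ[ℂ] W := (f.hom.hom.hom : (Y : Type) →ₗ[ℂ] W) with hφ
    have hcomm : ∀ (g : G) (v : Y), φ (Y.ρ g v) = ρ g (φ v) := by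
      intro g v
      exact congrArg (fun (t : Y.V ⟶ (FDRep.of ρ).V) => t.hom.hom v) (f.comm g)
    -- kernel is an invariant submodule of Y
    set K := LinearMap.ker φ with hKdef
    have hKinv : ∀ g : G, ∀ v : Y, v ∈ K → Y.ρ g v ∈ K := by
      intro g v hv
      rw [hKdef, LinearMap.mem_ker] at hv ⊢
      rw [hcomm g v, hv, map_zero]
    let ρK : Representation ℂ G K :=
      { toFun := fun g => (Y.ρ g).restrict (fun v hv => hKinv g v hv)
        map_one' := by
          ext v
          simp [LinearMap.restrict_apply, map_one Y.ρ]
        map_mul' := by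
          intro g h
          ext v
          simp [LinearMap.restrict_apply, map_mul Y.ρ] }
    let ι : FDRep.of ρK ⟶ Y :=
      { hom := ConcreteCategory.ofHom K.subtype
        comm := fun g => by ext v; rfl }
    have hι : ι ≫ f = 0 := by
      apply Action.hom_ext
      ext v
      show φ (K.subtype v) = 0
      simpa using v.2
    have hι0 : ι = 0 := (cancel_mono f).mp (by rw [hι, Limits.zero_comp])
    have hinj : Function.Injective φ := by
      rw [← LinearMap.ker_eq_bot, ← hKdef, Submodule.eq_bot_iff]
      intro v hv
      have h0 : K.subtype (⟨v, hv⟩ : K) = 0 := by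
        have := congrArg (fun (t : FDRep.of ρK ⟶ Y) => t.hom.hom.hom ⟨v, hv⟩) hι0
        exact this
      simpa using h0
    have hfne : φ ≠ 0 := by
      intro h
      apply hne
      apply Action.hom_ext
      apply FGModuleCat.hom_ext
      exact h
    have hsurj : Function.Surjective φ := by
      have hrange := hirr (LinearMap.range φ) (by
        intro g w hw
        obtain ⟨y, rfl⟩ := hw
        exact ⟨Y.ρ g y, hcomm g y⟩)
      rcases hrange with h | h
      · exact absurd (LinearMap.range_eq_bot.mp h) hfne
      · rw [← LinearMap.range_eq_top]
        exact h
    let e : (Y : Type) ≃ₗ[ℂ] W := LinearEquiv.ofBijective φ ⟨hinj, hsurj⟩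
    have heφ : ∀ v : Y, e v = φ v := fun v => rfl
    let ginv : FDRep.of ρ ⟶ Y :=
      { hom := ConcreteCategory.ofHom (e.symm : W →ₗ[ℂ] Y)
        comm := fun g => by
          ext w
          apply hinj
          show φ (e.symm (ρ g w)) = φ (Y.ρ g (e.symm w))
          rw [hcomm g (e.symm w)]
          have h1 : ∀ u : W, φ (e.symm u) = u := fun u => e.apply_symm_apply u
          rw [h1, h1]
      }
    refine ⟨⟨ginv, ?_, ?_⟩⟩
    · apply Action.hom_ext
      ext v
      show e.symm (φ v) = v
      exact e.symm_apply_apply v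
    · apply Action.hom_ext
      ext w
      show φ (e.symm w) = w
      exact e.apply_symm_apply w


lemma exists_sep_rep {G : Type} [Group G] [Fintype G] (M : Subgroup G) [hM : M.Normal] {x : G}
    (hx : x ∉ M) :
    ∃ V : FDRep ℂ G, Simple V ∧ (∀ m ∈ M, V.ρ m = 1) ∧ V.ρ x ≠ 1 := by
  classical
  let Q := G ⧸ M
  haveI : Fintype Q := Fintype.ofFinite Q
  haveI : NeZero ((Fintype.card Q : ℂ)) := ⟨Nat.cast_ne_zero.mpr Fintype.card_ne_zero⟩
  set A := MonoidAlgebra ℂ Q with hA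
  haveI : FiniteDimensional ℂ A := by
    have e := Finsupp.linearEquivFunOnFinite ℂ ℂ Q
    exact FiniteDimensional.of_injective (e.toLinearMap ∘ₗ (MonoidAlgebra.coeffLinearEquiv ℂ).toLinearMap)
      (e.injective.comp (MonoidAlgebra.coeffLinearEquiv ℂ).injective)
  set q : Q := QuotientGroup.mk x with hqdef
  have hq1 : q ≠ 1 := by
    intro h
    exact hx ((QuotientGroup.eq_one_iff x).mp h)
  set u : A := MonoidAlgebra.single q 1 with hu
  have hu1 : u ≠ 1 := by
    intro h
    have h2 : u.coeff q = (1 : A).coeff q := by rw [h]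
    rw [hu, MonoidAlgebra.one_def, MonoidAlgebra.coeff_single, MonoidAlgebra.coeff_single,
      Finsupp.single_eq_same, Finsupp.single_apply,
      if_neg (fun hh => hq1 hh.symm)] at h2
    exact one_ne_zero h2
  have hexists : ∃ p : Submodule A A, IsSimpleModule A p ∧ ∃ w : A, w ∈ p ∧ u * w ≠ w := by
    by_contra hcon
    push_neg at hcon
    have hall : ∀ a : A, u * a = a := by
      intro a
      have hmem : a ∈ (⊤ : Submodule A A) := trivial
      rw [← IsSemisimpleModule.sSup_simples_eq_top A A, sSup_eq_iSup'] at hmem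
      refine Submodule.iSup_induction (motive := fun a => u * a = a) _ hmem ?_ ?_ ?_
      · rintro ⟨p, hp⟩ y hy
        exact hcon p hp y hy
      · show u * 0 = 0
        rw [mul_zero]
      · intro y z hy hz
        show u * (y + z) = y + z
        rw [mul_add, hy, hz]
    have := hall 1
    rw [mul_one] at this
    exact hu1 this
  obtain ⟨p, hps, w, hwp, hw⟩ := hexists
  haveI := hps
  haveI : FiniteDimensional ℂ p :=
    FiniteDimensional.of_injective ((p.subtype).restrictScalars ℂ) Subtype.coe_injective
  haveI : Nontrivial p := by
    refine ⟨⟨w, hwp⟩, ⟨u * w, by simpa [smul_eq_mul] using p.smul_mem u hwp⟩, ?_⟩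
    intro h
    exact hw (congrArg Subtype.val h).symm
  let σmap : Q → (p →ₗ[ℂ] p) := fun q' =>
    { toFun := fun v => ⟨MonoidAlgebra.single q' (1:ℂ) * ↑v, by
        simpa [smul_eq_mul] using p.smul_mem (MonoidAlgebra.single q' (1:ℂ)) v.2⟩
      map_add' := by intro v₁ v₂; apply Subtype.ext; simp [mul_add]
      map_smul' := by intro c v; apply Subtype.ext; simp [mul_smul_comm] }
  let σ : Representation ℂ Q p :=
    { toFun := σmap
      map_one' := by
        apply LinearMap.ext; intro v; apply Subtype.ext
        show MonoidAlgebra.single (1:Q) (1:ℂ) * ↑v = ↑v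
        rw [← MonoidAlgebra.one_def, one_mul]
      map_mul' := by
        intro a b
        apply LinearMap.ext; intro v; apply Subtype.ext
        show MonoidAlgebra.single (a*b) (1:ℂ) * ↑v
          = MonoidAlgebra.single a (1:ℂ) * (MonoidAlgebra.single b (1:ℂ) * ↑v)
        rw [← mul_assoc, MonoidAlgebra.single_mul_single, one_mul] }
  have hσa : ∀ (q' : Q) (v : p), (↑(σ q' v) : A) = MonoidAlgebra.single q' (1:ℂ) * ↑v :=
    fun q' v => rfl
  have hclosed : ∀ (S : Submodule ℂ p), (∀ g' : Q, ∀ v ∈ S, σ g' v ∈ S) →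
      ∀ (a : A), ∀ v ∈ S, a • v ∈ S := by
    intro S hSinv a v hv
    have key : a • v = ∑ g' ∈ a.coeff.support, (a.coeff g') • σ g' v := by
      apply Subtype.ext
      have hcoe : ((∑ g' ∈ a.coeff.support, (a.coeff g') • σ g' v : p) : A)
          = ∑ g' ∈ a.coeff.support, (a.coeff g') • (MonoidAlgebra.single g' (1:ℂ) * (v : A)) := by
        rw [AddSubmonoidClass.coe_finset_sum]
        refine Finset.sum_congr rfl fun g' _ => ?_
        rw [Submodule.coe_smul_of_tower, hσa]
      rw [hcoe]
      show a * (v : A) = _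
      conv_lhs => rw [← MonoidAlgebra.sum_coeff_single a]
      rw [Finsupp.sum, Finset.sum_mul]
      refine Finset.sum_congr rfl fun g' _ => ?_
      rw [← smul_mul_assoc]
      congr 1
      rw [MonoidAlgebra.smul_single', mul_one]
    rw [key]
    exact Submodule.sum_mem _ fun g' _ => S.smul_mem _ (hSinv g' v hv)
  have hirr : ∀ S : Submodule ℂ p, (∀ g' : Q, ∀ v ∈ S, σ g' v ∈ S) → S = ⊥ ∨ S = ⊤ := by
    intro S hSinv
    let S' : Submodule A p :=
      { carrier := S
        add_mem' := fun ha hb => S.add_mem ha hb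
        zero_mem' := S.zero_mem
        smul_mem' := fun a v hv => hclosed S hSinv a v hv }
    rcases eq_bot_or_eq_top S' with h | h
    · left
      rw [Submodule.eq_bot_iff]
      intro v hv
      have h2 : v ∈ S' := hv
      rw [h] at h2
      simpa using h2
    · right
      rw [Submodule.eq_top_iff']
      intro v
      have h2 : v ∈ S' := by rw [h]; trivial
      exact h2
  -- pull back to G
  let π : G →* Q := QuotientGroup.mk' M
  let ρG : Representation ℂ G p := σ.comp π
  refine ⟨FDRep.of ρG, ?_, ?_, ?_⟩
  · apply simple_of_irreducible
    intro S hS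
    apply hirr
    intro q' v hv
    obtain ⟨g, rfl⟩ := QuotientGroup.mk'_surjective M q'
    exact hS g v hv
  · intro m hm
    show ρG m = 1
    have : π m = 1 := (QuotientGroup.eq_one_iff m).mpr hm
    show σ (π m) = 1
    rw [this, map_one]
  · show ρG x ≠ 1
    intro h
    apply hw
    have hπx : π x = q := rfl
    have h2 : σ q ⟨w, hwp⟩ = ⟨w, hwp⟩ := by
      have := congrArg (fun (t : p →ₗ[ℂ] p) => t ⟨w, hwp⟩) h
      simpa [ρG, hπx] using this
    have := congrArg Subtype.val h2
    rw [hσa] at this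
    exact this


lemma charKer_eq_subgroup {G : Type} [Group G] [Fintype G] {χ : G → ℂ} (hχ : χ ∈ Irr G) :
    ∃ H : Subgroup G, H.Normal ∧ (H : Set G) = charKer χ := by
  obtain ⟨V, -, rfl⟩ := hχ
  refine ⟨{ carrier := {x | V.ρ x = 1}
            one_mem' := map_one V.ρ
            mul_mem' := by
              intro a b ha hb
              show V.ρ (a * b) = 1
              rw [map_mul, ha, hb, one_mul]
            inv_mem' := by
              intro a ha
              show V.ρ a⁻¹ = 1
              have : V.ρ a⁻¹ * V.ρ a = 1 := by rw [← map_mul, inv_mul_cancel, map_one V.ρ]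
              rwa [ha, mul_one] at this }, ?_, ?_⟩
  · constructor
    intro n hn g
    show V.ρ (g * n * g⁻¹) = 1
    have hn' : V.ρ n = 1 := hn
    rw [map_mul, map_mul, hn', mul_one, ← map_mul, mul_inv_cancel, map_one V.ρ]
  · ext x
    show V.ρ x = 1 ↔ _
    exact (char_eq_char_one_iff V x).symm

lemma chi_triv_iff {G : Type} [Group G] [Fintype G] (x y : G) :
    (∀ χ ∈ Irr G, χ y = χ 1 → χ x = χ 1) ↔
      Subgroup.normalClosure {x} ≤ Subgroup.normalClosure {y} := by
  constructor
  · intro h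
    by_contra hle
    have hxmem : x ∉ Subgroup.normalClosure {y} := by
      intro hmem
      exact hle (Subgroup.normalClosure_le_normal (Set.singleton_subset_iff.mpr hmem))
    obtain ⟨V, hs, hm, hn⟩ := exists_sep_rep (Subgroup.normalClosure {y}) hxmem
    have hy : V.character y = V.character 1 := (char_eq_char_one_iff V y).mpr
      (hm y (Subgroup.subset_normalClosure (Set.mem_singleton y)))
    have hx := h V.character ⟨V, hs, rfl⟩ hy
    exact hn ((char_eq_char_one_iff V x).mp hx)
  · intro hle χ hχ hy
    obtain ⟨H, hHnorm, hHeq⟩ := charKer_eq_subgroup hχ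
    haveI := hHnorm
    have hyH : y ∈ H := by
      have : y ∈ charKer χ := hy
      rw [← hHeq] at this
      exact this
    have hNH : Subgroup.normalClosure {y} ≤ H :=
      Subgroup.normalClosure_le_normal (Set.singleton_subset_iff.mpr hyH)
    have hxH : x ∈ H :=
      hNH (hle (Subgroup.subset_normalClosure (Set.mem_singleton x)))
    have : x ∈ charKer χ := by rw [← hHeq]; exact hxH
    exact this

lemma Eg_eq_iff {G : Type} [Group G] [Fintype G] (h g : G) :
    Eg h = Eg g ↔ Subgroup.normalClosure {h} = Subgroup.normalClosure {g} := by
  have key : ∀ a b : G, Eg a = Eg b → (∀ χ ∈ Irr G, χ b = χ 1 → χ a = χ 1) := by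
    intro a b he χ hχ hb
    by_contra hne
    have h1 : χ ∈ Eg a := ⟨hχ, hne⟩
    rw [he] at h1
    exact h1.2 hb
  constructor
  · intro he
    exact le_antisymm ((chi_triv_iff h g).mp (key h g he))
      ((chi_triv_iff g h).mp (key g h he.symm))
  · intro hcl
    ext χ
    constructor
    · rintro ⟨hχ, hne⟩
      refine ⟨hχ, fun hg => hne ?_⟩
      exact (chi_triv_iff h g).mpr (le_of_eq hcl) χ hχ hg
    · rintro ⟨hχ, hne⟩
      refine ⟨hχ, fun hh => hne ?_⟩
      exact (chi_triv_iff g h).mpr (le_of_eq hcl.symm) χ hχ hh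

lemma ncl_conj {G : Type} [Group G] {h x : G} (hc : IsConj h x) :
    Subgroup.normalClosure {h} = Subgroup.normalClosure {x} := by
  obtain ⟨c, hcx⟩ := isConj_iff.mp hc
  apply le_antisymm
  · apply Subgroup.normalClosure_le_normal
    rw [Set.singleton_subset_iff]
    have hx : x ∈ Subgroup.normalClosure {x} :=
      Subgroup.subset_normalClosure (Set.mem_singleton x)
    have := Subgroup.normalClosure_normal (s := ({x} : Set G)) |>.conj_mem x hx c⁻¹
    have h2 : c⁻¹ * x * c⁻¹⁻¹ = h := by rw [← hcx]; group
    rwa [h2] at this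
  · apply Subgroup.normalClosure_le_normal
    rw [Set.singleton_subset_iff]
    have hh : h ∈ Subgroup.normalClosure {h} :=
      Subgroup.subset_normalClosure (Set.mem_singleton h)
    have := Subgroup.normalClosure_normal (s := ({h} : Set G)) |>.conj_mem h hh c
    rwa [hcx] at this

end Aux

theorem stmt_18 {G : Type} [Group G] [Fintype G] (g : G) :
    ∃ N : Subgroup G, N.Normal ∧ Kg g = NcircAll N ∧
      (N : Set G) = ⋂ χ ∈ {χ | χ ∈ Irr G ∧ χ g = χ 1}, charKer χ := by
  refine ⟨Subgroup.normalClosure {g}, Subgroup.normalClosure_normal, ?_, ?_⟩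
  · ext x
    constructor
    · rintro ⟨h, hE, hconj⟩
      have hcl : Subgroup.normalClosure {h} = Subgroup.normalClosure {g} := (Eg_eq_iff h g).mp hE
      have hclx : Subgroup.normalClosure {x} = Subgroup.normalClosure {g} :=
        (ncl_conj hconj).symm.trans hcl
      constructor
      · show x ∈ Subgroup.normalClosure {g}
        rw [← hclx]
        exact Subgroup.subset_normalClosure (Set.mem_singleton x)
      · intro hmem
        rw [Set.mem_iUnion₂] at hmem
        obtain ⟨H, ⟨hnorm, hlt⟩, hxH⟩ := hmem
        haveI := hnorm
        have hle : Subgroup.normalClosure {x} ≤ H :=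
          Subgroup.normalClosure_le_normal (Set.singleton_subset_iff.mpr hxH)
        rw [hclx] at hle
        exact absurd hle hlt.2
    · rintro ⟨hxN, hnot⟩
      have h1 : Subgroup.normalClosure {x} ≤ Subgroup.normalClosure {g} :=
        Subgroup.normalClosure_le_normal (Set.singleton_subset_iff.mpr hxN)
      have h2 : Subgroup.normalClosure {x} = Subgroup.normalClosure {g} := by
        by_contra hne
        apply hnot
        rw [Set.mem_iUnion₂]
        exact ⟨Subgroup.normalClosure {x},
          ⟨Subgroup.normalClosure_normal, lt_of_le_of_ne h1 hne⟩,
          Subgroup.subset_normalClosure (Set.mem_singleton x)⟩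
      exact ⟨x, (Eg_eq_iff x g).mpr h2, IsConj.refl x⟩
  · ext x
    simp only [Set.mem_iInter, Set.mem_setOf_eq]
    constructor
    · rintro hx χ ⟨hχ, hχg⟩
      have hle : Subgroup.normalClosure {x} ≤ Subgroup.normalClosure {g} :=
        Subgroup.normalClosure_le_normal (Set.singleton_subset_iff.mpr hx)
      exact (chi_triv_iff x g).mpr hle χ hχ hχg
    · intro hx
      have hall : ∀ χ ∈ Irr G, χ g = χ 1 → χ x = χ 1 := fun χ hχ hg1 => hx χ ⟨hχ, hg1⟩
      exact (chi_triv_iff x g).mp hall (Subgroup.subset_normalClosure (Set.mem_singleton x))
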